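/- Let r, λ ∈ ℕ, p a prime, and for real x with |x| < 1 set T_r(x, λ) = Σ_{j ≥ λ} d_r(p^j) x^j. Then (1 − x)^r T_r(x, λ) = λ d_r(p^λ) ∫₀^x t^{λ−1} (1 − t)^{r−1} dt. Equivalently, (1 − x)^r T_r(x, λ) = d_r(p^λ) x^λ H_{λ,r}(x), where H_{λ,r}(x) = λ x^{−λ} ∫₀^x t^{λ−1}(1−t)^{r−1} dt is a polynomial of degree r with H_{λ,r}(0) = 1. -/

import Mathlib

open Finset

noncomputable section

/-- `dr r n` is the `r`-fold divisor function `d_r(n)`. -/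
def dr : ℕ → ℕ → ℕ
  | 0, n => if n = 1 then 1 else 0
  | r + 1, n => ∑ d ∈ n.divisors, dr r d

private lemma hockey (s : ℕ) :
    ∀ j : ℕ, ∑ i ∈ Finset.range (j+1), (s+i).choose i = (s+1+j).choose j
  | 0 => by simp
  | j+1 => by
    rw [Finset.sum_range_succ, hockey s j,
      show s+(j+1) = s+1+j by omega, show s+1+(j+1) = (s+1+j)+1 by omega,
      Nat.choose_succ_succ]

private lemma drval {p : ℕ} (hp : p.Prime) (s : ℕ) :
    ∀ j : ℕ, dr (s+1) (p^j) = (s+j).choose j := by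
  induction s with
  | zero =>
    intro j
    show (∑ d ∈ (p^j).divisors, dr 0 d) = _
    rw [Nat.sum_divisors_prime_pow hp]
    have hpow : ∀ x : ℕ, p ^ x = 1 ↔ x = 0 := by
      intro x
      constructor
      · intro h
        by_contra hx
        exact absurd h (Nat.one_lt_pow hx hp.one_lt).ne'
      · rintro rfl; simp
    simp only [dr]
    calc ∑ x ∈ range (j+1), (if p^x = 1 then 1 else 0)
        = ∑ x ∈ range (j+1), (if x = 0 then 1 else 0) :=
          Finset.sum_congr rfl (fun x _ => by simp only [hpow x])
      _ = 1 := by simp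
    simp
  | succ s ih =>
    intro j
    show (∑ d ∈ (p^j).divisors, dr (s+1) d) = _
    rw [Nat.sum_divisors_prime_pow hp]
    simp only [ih]
    exact hockey s j

private lemma master (s : ℕ) : ∀ x : ℝ, |x| < 1 →
    Summable (fun j : ℕ => ((s+j).choose j : ℝ) * x^j) ∧
    (1-x)^(s+1) * ∑' j : ℕ, ((s+j).choose j : ℝ) * x^j = 1 := by
  induction s with
  | zero =>
    intro x hx
    have h1 : (1:ℝ) - x ≠ 0 := by
      have := (abs_lt.mp hx).2
      intro h; linarith
    have hg : Summable (fun j : ℕ => x ^ j) :=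
      summable_geometric_of_norm_lt_one (by rwa [Real.norm_eq_abs])
    constructor
    · simpa using hg
    · simp only [Nat.zero_add, Nat.choose_self, Nat.cast_one, one_mul, pow_one]
      rw [tsum_geometric_of_abs_lt_one hx, mul_inv_cancel₀ h1]
  | succ s ih =>
    intro x hx
    have h1 : (1:ℝ) - x ≠ 0 := by
      have := (abs_lt.mp hx).2
      intro h; linarith
    have hxa : |(|x|)| < 1 := by rwa [abs_abs]
    obtain ⟨hS, hT⟩ := ih x hx
    obtain ⟨hSa, -⟩ := ih |x| hxa
    have hg : Summable (fun j : ℕ => x ^ j) :=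
      summable_geometric_of_norm_lt_one (by rwa [Real.norm_eq_abs])
    have hfn : Summable (fun j : ℕ => ‖((s+j).choose j : ℝ) * x^j‖) := by
      have heq : ∀ j : ℕ, ‖((s+j).choose j : ℝ) * x^j‖ = ((s+j).choose j : ℝ) * |x|^j := by
        intro j
        rw [Real.norm_eq_abs, abs_mul, abs_pow, Nat.abs_cast]
      simp only [heq]
      exact hSa
    have hgn : Summable (fun j : ℕ => ‖x^j‖) := by
      simp only [Real.norm_eq_abs, abs_pow]
      exact summable_geometric_of_norm_lt_one (by rwa [Real.norm_eq_abs, abs_abs])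
    have hkey : ∀ n : ℕ, ∑ kl ∈ Finset.HasAntidiagonal.antidiagonal n,
        (((s+kl.1).choose kl.1 : ℝ) * x^kl.1) * x^kl.2 = ((s+1+n).choose n : ℝ) * x^n := by
      intro n
      rw [Finset.Nat.sum_antidiagonal_eq_sum_range_succ
        (fun a b => ((s+a).choose a : ℝ) * x^a * x^b)]
      have h2 : ∀ k ∈ Finset.range (n+1),
          ((s+k).choose k : ℝ) * x^k * x^(n-k) = ((s+k).choose k : ℝ) * x^n := by
        intro k hk
        rw [mul_assoc, ← pow_add, show k + (n-k) = n by
          have := Finset.mem_range.mp hk; omega]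
      rw [Finset.sum_congr rfl h2, ← Finset.sum_mul, ← Nat.cast_sum, hockey s n]
    have hprod := tsum_mul_tsum_eq_tsum_sum_antidiagonal_of_summable_norm hfn hgn
    have hsum2 : Summable (fun n : ℕ => ∑ kl ∈ Finset.HasAntidiagonal.antidiagonal n,
        (((s+kl.1).choose kl.1 : ℝ) * x^kl.1) * x^kl.2) :=
      (summable_norm_sum_mul_antidiagonal_of_summable_norm hfn hgn).of_norm
    simp only [hkey] at hprod hsum2
    constructor
    · exact hsum2
    · rw [← hprod, show s+1+1 = (s+1)+1 from rfl, pow_succ]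
      have hgeo : (1-x) * ∑' j : ℕ, x^j = 1 := by
        rw [tsum_geometric_of_abs_lt_one hx, mul_inv_cancel₀ h1]
      calc (1-x)^(s+1) * (1-x) * ((∑' j : ℕ, ((s+j).choose j : ℝ) * x^j) * ∑' j : ℕ, x^j)
          = ((1-x)^(s+1) * ∑' j : ℕ, ((s+j).choose j : ℝ) * x^j) * ((1-x) * ∑' j : ℕ, x^j) := by
            ring
        _ = 1 := by rw [hT, hgeo, one_mul]

private lemma tele (s m : ℕ) : ∀ t : ℝ,
    ((s:ℝ)+1) * (∑ j ∈ Finset.range (m+1), ((s+j).choose j : ℝ) * t^j)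
      - (1-t) * (∑ j ∈ Finset.range (m+1), ((s+j).choose j : ℝ) * ((j:ℝ) * t^(j-1)))
    = (((m+1) * (s+m+1).choose (m+1) : ℕ) : ℝ) * t^m := by
  induction m with
  | zero =>
    intro t
    simp [Nat.choose_one_right]
  | succ m ih =>
    intro t
    rw [Finset.sum_range_succ (fun j => ((s+j).choose j : ℝ) * t^j) (m+1),
      Finset.sum_range_succ (fun j => ((s+j).choose j : ℝ) * ((j:ℝ) * t^(j-1))) (m+1)]
    have h := Nat.add_one_mul_choose_eq (s+m+1) (m+1)
    simp only [Nat.succ_eq_add_one, show s+m+1+1 = s+m+2 by omega, show m+1+1 = m+2 by omega] at h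
    have hnat : ((s:ℝ)+m+2) * (((s+m+1).choose (m+1) : ℕ) : ℝ)
        = (((s+m+2).choose (m+2) : ℕ) : ℝ) * ((m:ℝ)+2) := by exact_mod_cast h
    have ht := ih t
    simp only [show s+(m+1) = s+m+1 from rfl, show s+(m+1)+1 = s+m+2 from rfl,
      show m+1+1 = m+2 from rfl, Nat.add_sub_cancel] at *
    push_cast at ht hnat ⊢
    linear_combination ht + t^(m+1) * hnat

private lemma integral_eval (s m : ℕ) (x : ℝ) :
    (((m+1) * (s+m+1).choose (m+1) : ℕ) : ℝ) * ∫ t in (0:ℝ)..x, t^m * (1-t)^s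
      = 1 - (1-x)^(s+1) * ∑ j ∈ Finset.range (m+1), ((s+j).choose j : ℝ) * x^j := by
  set L : ℝ := (((m+1) * (s+m+1).choose (m+1) : ℕ) : ℝ) with hL
  set G : ℝ → ℝ := fun y => 1 - (1-y)^(s+1) * ∑ j ∈ Finset.range (m+1), ((s+j).choose j : ℝ) * y^j
    with hG
  have hq : ∀ t : ℝ, HasDerivAt (fun y => ∑ j ∈ Finset.range (m+1), ((s+j).choose j : ℝ) * y^j)
      (∑ j ∈ Finset.range (m+1), ((s+j).choose j : ℝ) * ((j:ℝ) * t^(j-1))) t := by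
    intro t
    apply HasDerivAt.fun_sum
    intro j _
    exact (hasDerivAt_pow j t).const_mul _
  have hone : ∀ t : ℝ, HasDerivAt (fun y : ℝ => (1-y)^(s+1))
      (((s:ℝ)+1) * (1-t)^s * (-1)) t := by
    intro t
    have h0 : HasDerivAt (fun y : ℝ => 1-y) (-1) t := (hasDerivAt_id t).const_sub 1
    have := h0.fun_pow (s+1)
    simpa [Nat.add_sub_cancel] using this
  have hGd : ∀ t : ℝ, HasDerivAt G (L * (t^m * (1-t)^s)) t := by
    intro t
    have h1 := ((hone t).mul (hq t)).const_sub 1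
    refine h1.congr_deriv (Eq.symm ?_)
    have := tele s m t
    rw [← hL] at this
    simp only [← mul_assoc] at this ⊢
    linear_combination (-((1:ℝ)-t)^s) * this
  have hint : IntervalIntegrable (fun t : ℝ => L * (t^m * (1-t)^s)) MeasureTheory.volume 0 x := by
    apply Continuous.intervalIntegrable
    fun_prop
  have key := intervalIntegral.integral_eq_sub_of_hasDerivAt
    (f := G) (f' := fun t => L * (t^m * (1-t)^s)) (fun t _ => hGd t) hint
  rw [intervalIntegral.integral_const_mul] at key
  have hG0 : G 0 = 0 := by
    rw [hG]
    simp only [sub_zero, one_pow, one_mul]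
    rw [Finset.sum_eq_single 0]
    · simp
    · intro b _ hb; simp [zero_pow hb]
    · intro h; simp at h
  rw [key, hG0, sub_zero, hG]

private noncomputable def Hpoly (s m : ℕ) : Polynomial ℝ :=
  ∑ k ∈ Finset.range (s+1),
    Polynomial.C (((m:ℝ)+1) * (-1)^k * (s.choose k : ℝ) / ((m:ℝ)+1+k)) * Polynomial.X^k

private lemma Hpoly_eval (s m : ℕ) (x : ℝ) :
    (Hpoly s m).eval x
      = ∑ k ∈ Finset.range (s+1), ((m:ℝ)+1) * (-1)^k * (s.choose k : ℝ) / ((m:ℝ)+1+k) * x^k := by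
  simp [Hpoly, Polynomial.eval_finset_sum]

private lemma Hpoly_natDegree (s m : ℕ) : (Hpoly s m).natDegree ≤ s+1 := by
  apply Polynomial.natDegree_sum_le_of_forall_le
  intro k hk
  refine le_trans (Polynomial.natDegree_mul_le) ?_
  simp only [Polynomial.natDegree_C, Polynomial.natDegree_X_pow, zero_add]
  exact le_of_lt (Finset.mem_range.mp hk)

private lemma Hpoly_eval_zero (s m : ℕ) : (Hpoly s m).eval 0 = 1 := by
  rw [Hpoly_eval]
  rw [Finset.sum_eq_single 0]
  · have : ((m:ℝ)+1) ≠ 0 := by positivity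
    simp [this]
  · intro b _ hb; simp [zero_pow hb]
  · intro h; simp at h

private lemma Hpoly_key (s m : ℕ) (x : ℝ) :
    x^(m+1) * (Hpoly s m).eval x = ((m:ℝ)+1) * ∫ t in (0:ℝ)..x, t^m * (1-t)^s := by
  set a : ℕ → ℝ := fun k => ((m:ℝ)+1) * (-1)^k * (s.choose k : ℝ) / ((m:ℝ)+1+k) with ha
  set K : ℝ → ℝ := fun y => ∑ k ∈ Finset.range (s+1), a k * y^(m+1+k) with hK
  have hKd : ∀ t : ℝ, HasDerivAt K (((m:ℝ)+1) * (t^m * (1-t)^s)) t := by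
    intro t
    have h1 : HasDerivAt K
        (∑ k ∈ Finset.range (s+1), a k * (((m+1+k : ℕ):ℝ) * t^(m+1+k-1))) t := by
      apply HasDerivAt.fun_sum
      intro k _
      exact (hasDerivAt_pow (m+1+k) t).const_mul _
    convert h1 using 1
    have hbin : ((1:ℝ)-t)^s = ∑ k ∈ Finset.range (s+1), (-t)^k * (s.choose k : ℝ) := by
      rw [show (1:ℝ)-t = -t + 1 by ring, add_pow]
      simp
    rw [hbin, Finset.mul_sum, Finset.mul_sum]
    apply Finset.sum_congr rfl
    intro k _
    have hne : ((m:ℝ)+1+k) ≠ 0 := by positivity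
    rw [show m+1+k-1 = m+k by omega, pow_add t m k, ha]
    push_cast
    field_simp
    ring
  have hint : IntervalIntegrable (fun t : ℝ => ((m:ℝ)+1) * (t^m * (1-t)^s))
      MeasureTheory.volume 0 x := by
    apply Continuous.intervalIntegrable
    fun_prop
  have key := intervalIntegral.integral_eq_sub_of_hasDerivAt
    (f := K) (f' := fun t => ((m:ℝ)+1) * (t^m * (1-t)^s)) (fun t _ => hKd t) hint
  rw [intervalIntegral.integral_const_mul] at key
  have hK0 : K 0 = 0 := by
    rw [hK]
    apply Finset.sum_eq_zero
    intro k _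
    simp [zero_pow (show m+1+k ≠ 0 by omega)]
  rw [key, hK0, sub_zero, hK, Hpoly_eval, Finset.mul_sum]
  apply Finset.sum_congr rfl
  intro k _
  rw [pow_add]
  ring

/-- **Lemma 6** (Ng): for `r, λ ≥ 1` and `p` prime, with
`T_r(x,λ) = Σ_{j ≥ λ} d_r(p^j) x^j` (|x| < 1), one has
`(1-x)^r T_r(x,λ) = λ d_r(p^λ) ∫₀^x t^{λ-1}(1-t)^{r-1} dt`; equivalently
`(1-x)^r T_r(x,λ) = d_r(p^λ) x^λ H_{λ,r}(x)` where
`H_{λ,r}(x) = λ x^{-λ} ∫₀^x t^{λ-1}(1-t)^{r-1} dt` is a polynomial (of degree at most `r`)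
with `H_{λ,r}(0) = 1`. -/
theorem divisor_generating_function (r lam : ℕ) (hr : 1 ≤ r) (hlam : 1 ≤ lam)
    (p : ℕ) (hp : p.Prime) :
    (∀ x : ℝ, |x| < 1 →
      (1 - x) ^ r * (∑' j : ℕ, if lam ≤ j then (dr r (p ^ j) : ℝ) * x ^ j else 0) =
        lam * (dr r (p ^ lam) : ℝ) * ∫ t in (0:ℝ)..x, t ^ (lam - 1) * (1 - t) ^ (r - 1)) ∧
    ∃ H : Polynomial ℝ,
      (∀ x : ℝ, x ≠ 0 →
        H.eval x = lam * x ^ (-(lam : ℤ)) * ∫ t in (0:ℝ)..x, t ^ (lam - 1) * (1 - t) ^ (r - 1)) ∧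
      H.natDegree ≤ r ∧ H.eval 0 = 1 ∧
      ∀ x : ℝ, |x| < 1 →
        (1 - x) ^ r * (∑' j : ℕ, if lam ≤ j then (dr r (p ^ j) : ℝ) * x ^ j else 0) =
          (dr r (p ^ lam) : ℝ) * x ^ lam * H.eval x := by
  obtain ⟨s, rfl⟩ : ∃ s, r = s+1 := ⟨r-1, by omega⟩
  obtain ⟨m, rfl⟩ : ∃ m, lam = m+1 := ⟨lam-1, by omega⟩
  have hdr : ∀ j : ℕ, (dr (s+1) (p^j) : ℝ) = ((s+j).choose j : ℝ) := fun j => by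
    rw [drval hp s j]
  have hdrlam : (dr (s+1) (p^(m+1)) : ℝ) = (((s+m+1).choose (m+1) : ℕ) : ℝ) := by
    rw [drval hp s (m+1)]
    rfl
  have tail : ∀ x : ℝ, |x| < 1 →
      (∑' j : ℕ, if m+1 ≤ j then (dr (s+1) (p^j) : ℝ) * x^j else 0)
        = (∑' j : ℕ, ((s+j).choose j : ℝ) * x^j)
          - ∑ j ∈ Finset.range (m+1), ((s+j).choose j : ℝ) * x^j := by
    intro x hx
    obtain ⟨hS, -⟩ := master s x hx
    set g : ℕ → ℝ := fun j => ((s+j).choose j : ℝ) * x^j with hg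
    set f1 : ℕ → ℝ := fun j => if m+1 ≤ j then (dr (s+1) (p^j) : ℝ) * x^j else 0 with hf1e
    set f2 : ℕ → ℝ := fun j => if m+1 ≤ j then 0 else g j with hf2e
    have hf1 : Summable f1 := by
      refine (hS.indicator {j : ℕ | m+1 ≤ j}).congr (fun j => ?_)
      by_cases h : m+1 ≤ j <;>
        simp [hf1e, hg, Set.indicator_apply, Set.mem_setOf_eq, h, hdr]
    have hf2z : ∀ j ∉ Finset.range (m+1), f2 j = 0 := by
      intro j hj
      simp only [hf2e]
      rw [if_pos (by simpa using hj)]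
    have hf2 : Summable f2 := summable_of_ne_finset_zero hf2z
    have hsplit : ∀ j : ℕ, g j = f1 j + f2 j := by
      intro j
      by_cases h : m < j <;> simp [hf1e, hf2e, hg, h, hdr]
    have htsum : ∑' j, g j = (∑' j, f1 j) + ∑' j, f2 j := by
      rw [← Summable.tsum_add hf1 hf2]
      exact tsum_congr hsplit
    have htf2 : ∑' j, f2 j = ∑ j ∈ Finset.range (m+1), ((s+j).choose j : ℝ) * x^j := by
      rw [tsum_eq_sum hf2z]
      apply Finset.sum_congr rfl
      intro j hj
      simp only [hf2e, hg]
      rw [if_neg (by simp at hj; omega)]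
    rw [htsum, htf2]
    ring
  have part1 : ∀ x : ℝ, |x| < 1 →
      (1-x)^(s+1) * (∑' j : ℕ, if m+1 ≤ j then (dr (s+1) (p^j) : ℝ) * x^j else 0)
        = (((m+1) * (s+m+1).choose (m+1) : ℕ) : ℝ) * ∫ t in (0:ℝ)..x, t^m * (1-t)^s := by
    intro x hx
    rw [tail x hx, mul_sub, (master s x hx).2, integral_eval s m x]
  constructor
  · intro x hx
    simp only [Nat.add_sub_cancel]
    rw [part1 x hx, hdrlam]
    push_cast
    ring
  · refine ⟨Hpoly s m, ?_, Hpoly_natDegree s m, Hpoly_eval_zero s m, ?_⟩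
    · intro x hx0
      simp only [Nat.add_sub_cancel]
      have hk := Hpoly_key s m x
      have hxne : x^(m+1) ≠ 0 := pow_ne_zero _ hx0
      rw [zpow_neg, zpow_natCast]
      push_cast
      field_simp
      linear_combination hk
    · intro x hx
      rw [part1 x hx, hdrlam]
      have hk := Hpoly_key s m x
      push_cast
      linear_combination (-(((s+m+1).choose (m+1) : ℕ) : ℝ)) * hk
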